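/- For every d ≥ 0, no d-sphere is contractible; consequently, for every d ≥ 1, no discrete d-manifold is contractible. -/

import Mathlib

open Finset
open scoped Classical

/-- Contractibility of the subgraph of `G` induced on the vertex set `A`. -/
inductive IsContractible {V : Type*} (G : SimpleGraph V) : Finset V → Prop
  | single (v : V) : IsContractible G {v}
  | step {A : Finset V} (v : V) (hv : v ∈ A)
      (hS : IsContractible G (A.filter (fun w => G.Adj v w)))
      (hrest : IsContractible G (A.erase v)) : IsContractible G A

/-- `IsSphere G d A` : the subgraph of `G` induced on `A` is a `d`-sphere. -/
inductive IsSphere {V : Type*} (G : SimpleGraph V) : ℤ → Finset V → Prop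
  | empty : IsSphere G (-1) ∅
  | succ {d : ℤ} {A : Finset V} (hd : 0 ≤ d)
      (hS : ∀ v ∈ A, IsSphere G (d - 1) (A.filter (fun w => G.Adj v w)))
      (hv : ∃ v ∈ A, IsContractible G (A.erase v)) : IsSphere G d A

/-- Reduced (negated) Euler characteristic: sum over all cliques (including ∅). -/
noncomputable def nf {V : Type*} (G : SimpleGraph V) (A : Finset V) : ℤ :=
  ∑ S ∈ A.powerset.filter (fun (S : Finset V) => (S : Set V).Pairwise G.Adj), (-1 : ℤ) ^ S.card

lemma nf_excision {V : Type*} (G : SimpleGraph V) {A : Finset V} {v : V} (hv : v ∈ A) :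
    nf G A = nf G (A.erase v) - nf G (A.filter (fun w => G.Adj v w)) := by
  classical
  set N := A.filter (fun w => G.Adj v w) with hN
  have hvN : v ∉ N := by simp [hN]
  unfold nf
  rw [← Finset.sum_filter_add_sum_filter_not
        (A.powerset.filter (fun (S : Finset V) => (S : Set V).Pairwise G.Adj)) (fun S => v ∈ S)]
  have h1 : (A.powerset.filter (fun (S : Finset V) => (S : Set V).Pairwise G.Adj)).filter
      (fun S => ¬ v ∈ S) = (A.erase v).powerset.filter (fun (S : Finset V) => (S : Set V).Pairwise G.Adj) := by
    ext S
    simp only [Finset.mem_filter, Finset.mem_powerset, Finset.subset_erase]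
    tauto
  have h2 : ∑ S ∈ (A.powerset.filter (fun (S : Finset V) => (S : Set V).Pairwise G.Adj)).filter
      (fun S => v ∈ S), (-1 : ℤ) ^ S.card
      = - ∑ T ∈ N.powerset.filter (fun (T : Finset V) => (T : Set V).Pairwise G.Adj), (-1 : ℤ) ^ T.card := by
    rw [← Finset.sum_neg_distrib]
    refine Finset.sum_nbij' (fun S => S.erase v) (fun T => insert v T) ?_ ?_ ?_ ?_ ?_
    · intro S hS
      simp only [Finset.mem_filter, Finset.mem_powerset] at hS ⊢
      obtain ⟨⟨hSA, hpair⟩, hvS⟩ := hS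
      refine ⟨?_, hpair.mono (by simp [Finset.erase_subset])⟩
      intro t ht
      simp only [Finset.mem_erase] at ht
      simp only [hN, Finset.mem_filter]
      exact ⟨hSA ht.2, hpair (by exact_mod_cast hvS) (by exact_mod_cast ht.2) (Ne.symm ht.1)⟩
    · intro T hT
      simp only [Finset.mem_filter, Finset.mem_powerset] at hT ⊢
      obtain ⟨hTN, hpair⟩ := hT
      have hTA : T ⊆ A := hTN.trans (Finset.filter_subset _ _)
      refine ⟨⟨Finset.insert_subset hv hTA, ?_⟩, Finset.mem_insert_self _ _⟩
      rw [Finset.coe_insert]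
      have := G.symm; rw [Set.pairwise_insert_of_symm]
      refine ⟨hpair, ?_⟩
      intro t ht _
      have := hTN (by exact_mod_cast ht)
      simp only [hN, Finset.mem_filter] at this
      exact this.2
    · intro S hS
      simp only [Finset.mem_filter] at hS
      exact Finset.insert_erase hS.2
    · intro T hT
      simp only [Finset.mem_filter, Finset.mem_powerset] at hT
      exact Finset.erase_insert (fun h => hvN (hT.1 h))
    · intro S hS
      simp only [Finset.mem_filter] at hS
      have hpos : 1 ≤ S.card := Finset.card_pos.mpr ⟨v, hS.2⟩
      have hcard : S.card = (S.erase v).card + 1 := by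
        rw [Finset.card_erase_of_mem hS.2]; omega
      rw [hcard, pow_succ]; ring
  rw [h1, h2]; ring


lemma nf_contractible {V : Type*} {G : SimpleGraph V} {A : Finset V}
    (h : IsContractible G A) : nf G A = 0 := by
  induction h with
  | single v =>
    have hfilt : ({v} : Finset V).filter (fun w => G.Adj v w) = ∅ := by
      ext w
      simp only [Finset.mem_filter, Finset.mem_singleton, Finset.notMem_empty, iff_false]
      rintro ⟨rfl, hadj⟩
      exact G.loopless.irrefl _ hadj
    rw [nf_excision G (Finset.mem_singleton_self v), Finset.erase_singleton, hfilt]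
    ring
  | step v hv hS hrest ihS ihrest =>
    rw [nf_excision G hv, ihS, ihrest]; ring

lemma nf_sphere {V : Type*} {G : SimpleGraph V} {d : ℤ} {A : Finset V}
    (h : IsSphere G d A) : nf G A = if Even d then -1 else 1 := by
  induction h with
  | empty =>
    have hne : ¬ Even (-1 : ℤ) := by decide
    rw [if_neg hne]
    simp [nf, Finset.filter_singleton]
  | @succ e B hd hS hv ih =>
    obtain ⟨v, hvA, hcon⟩ := hv
    rw [nf_excision G hvA, nf_contractible hcon, ih v hvA]
    by_cases he : Even e <;> simp [he, Int.even_sub_one, ← Int.not_even_iff_odd]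

lemma not_sphere_empty {V : Type*} (G : SimpleGraph V) {e : ℤ} (he : 0 ≤ e) :
    ¬ IsSphere G e (∅ : Finset V) := by
  intro h
  cases h with
  | empty => omega
  | succ hd hS hv => obtain ⟨v, hv', _⟩ := hv; simp at hv'

theorem sphere_and_manifold_not_contractible {V : Type*} [Fintype V] :
    (∀ (d : ℤ), 0 ≤ d → ∀ (G : SimpleGraph V) (A : Finset V),
      IsSphere G d A → ¬ IsContractible G A) ∧
    (∀ (d : ℤ), 1 ≤ d → ∀ (G : SimpleGraph V) (A : Finset V), A.Nonempty →
      (∀ v ∈ A, IsSphere G (d - 1) (A.filter (fun w => G.Adj v w))) →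
      ¬ IsContractible G A) := by
  have part1 : ∀ (d : ℤ), 0 ≤ d → ∀ (G : SimpleGraph V) (A : Finset V),
      IsSphere G d A → ¬ IsContractible G A := by
    intro d _ G A hsph hcon
    have h1 := nf_sphere hsph
    have h2 := nf_contractible hcon
    by_cases he : Even d <;> simp [he] at h1 <;> omega
  refine ⟨part1, ?_⟩
  intro d hd G A _ hsph hcon
  cases hcon with
  | single v =>
    have hfilt : ({v} : Finset V).filter (fun w => G.Adj v w) = ∅ := by
      ext w
      simp only [Finset.mem_filter, Finset.mem_singleton, Finset.notMem_empty, iff_false]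
      rintro ⟨rfl, hadj⟩
      exact G.loopless.irrefl _ hadj
    have := hsph v (Finset.mem_singleton_self v)
    rw [hfilt] at this
    exact not_sphere_empty G (by omega) this
  | step v hvA hS hrest =>
    exact part1 (d - 1) (by omega) G _ (hsph v hvA) hS
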